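/- The function φ̄(x) := (φ̄₁(x), φ̄₂(x)) with φ̄₁(x) = e^{iμ/2} E(x)⁻¹ (1 - (i/2) q(x) ∫_x^∞ r(y) dy) and φ̄₂(x) = -e^{iμ/2} E(x) ∫_x^∞ r(y) dy satisfies the zero-energy system φ̄₁' = p φ̄₂, φ̄₂' = s φ̄₁, where p = ((i/2) q' + (1/4) q² r) E⁻² and s = r E². -/

import Mathlib

open Complex MeasureTheory

theorem zero_energy_jost_phibar_ps
    (q r : SchwartzMap ℝ ℂ)
    (E : ℝ → ℂ) (hE : ∀ x, E x = Complex.exp ((I / 2) * ∫ y in Set.Iic x, q y * r y))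
    (μ : ℂ) (hμ : μ = ∫ y : ℝ, q y * r y)
    (p s : ℝ → ℂ)
    (hp : ∀ x, p x = ((I / 2) * deriv q x + (1 / 4) * (q x) ^ 2 * r x) * (E x) ^ (-2 : ℤ))
    (hs : ∀ x, s x = r x * (E x) ^ 2)
    (φb₁ φb₂ : ℝ → ℂ)
    (hφb₁ : ∀ x, φb₁ x = Complex.exp (I * μ / 2) * (E x)⁻¹ *
      (1 - (I / 2) * q x * ∫ y in Set.Ioi x, r y))
    (hφb₂ : ∀ x, φb₂ x = -Complex.exp (I * μ / 2) * E x * ∫ y in Set.Ioi x, r y) :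
    (∀ x, HasDerivAt φb₁ (p x * φb₂ x) x) ∧ (∀ x, HasDerivAt φb₂ (s x * φb₁ x) x) := by
  have hrint : Integrable (fun y => r y) := r.integrable
  have hqr : Integrable (fun y => q y * r y) :=
    hrint.bdd_mul q.continuous.aestronglyMeasurable
      (Filter.Eventually.of_forall fun x => q.norm_le_seminorm ℝ x)
  -- derivative of the running integral of q*r
  have hF : ∀ x, HasDerivAt (fun u => ∫ y in Set.Iic u, q y * r y) (q x * r x) x := by
    intro x
    have heq : (fun u => ∫ y in Set.Iic u, q y * r y) =
        fun u => (∫ y in Set.Iic x, q y * r y) + ∫ y in x..u, q y * r y := by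
      funext u
      have h := intervalIntegral.integral_Iic_sub_Iic (f := fun y => q y * r y)
        (μ := volume) hqr.integrableOn hqr.integrableOn (a := x) (b := u)
      linear_combination h
    rw [heq]
    exact (intervalIntegral.integral_hasDerivAt_right hqr.intervalIntegrable
      ((q.continuous.mul r.continuous).stronglyMeasurableAtFilter _ _)
      (q.continuous.mul r.continuous).continuousAt).const_add _
  -- derivative of the tail integral of r
  have hG : ∀ x, HasDerivAt (fun u => ∫ y in Set.Ioi u, r y) (-(r x)) x := by
    intro x
    have heq : (fun u => ∫ y in Set.Ioi u, r y) =
        fun u => (∫ y : ℝ, r y) - ∫ y in Set.Iic u, r y := by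
      funext u
      have h := intervalIntegral.integral_Iic_add_Ioi (f := fun y => r y) (μ := volume)
        (b := u) hrint.integrableOn hrint.integrableOn
      linear_combination h
    have hFr : HasDerivAt (fun u => ∫ y in Set.Iic u, r y) (r x) x := by
      have heq2 : (fun u => ∫ y in Set.Iic u, r y) =
          fun u => (∫ y in Set.Iic x, r y) + ∫ y in x..u, r y := by
        funext u
        have h := intervalIntegral.integral_Iic_sub_Iic (f := fun y => r y)
          (μ := volume) hrint.integrableOn hrint.integrableOn (a := x) (b := u)
        linear_combination h
      rw [heq2]
      exact (intervalIntegral.integral_hasDerivAt_right hrint.intervalIntegrable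
        (r.continuous.stronglyMeasurableAtFilter _ _)
        r.continuous.continuousAt).const_add _
    rw [heq]
    exact hFr.const_sub _
  have hEfun : E = fun u => Complex.exp ((I / 2) * ∫ y in Set.Iic u, q y * r y) :=
    funext hE
  have hE' : ∀ x, HasDerivAt E ((I / 2) * (q x * r x) * E x) x := by
    intro x
    rw [hEfun]
    simpa [mul_comm] using (((hF x).const_mul (I / 2)).cexp)
  have hEne : ∀ x, E x ≠ 0 := fun x => by rw [hE x]; exact Complex.exp_ne_zero _
  have hq' : ∀ x, HasDerivAt (fun u => (q u : ℂ)) (deriv q x) x := fun x =>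
    (q.differentiable.differentiableAt).hasDerivAt
  constructor
  · intro x
    have h1 : HasDerivAt (fun u => 1 - (I / 2) * q u * ∫ y in Set.Ioi u, r y)
        (-(((I / 2) * deriv q x) * (∫ y in Set.Ioi x, r y) +
           ((I / 2) * q x) * (-(r x)))) x :=
      ((((hq' x).const_mul (I / 2)).mul (hG x)).const_sub 1)
    have hinv : HasDerivAt (fun u => (E u)⁻¹)
        ((E x)⁻¹ * (-(I / 2 * (q x * r x)))) x := by
      have h := (((hF x).const_mul (I / 2)).neg).cexp
      have he1 : (fun u => (E u)⁻¹) =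
          fun u => Complex.exp (-(I / 2 * ∫ y in Set.Iic u, q y * r y)) :=
        funext fun u => by rw [hE u, ← Complex.exp_neg]
      have he2 : (E x)⁻¹ = Complex.exp (-(I / 2 * ∫ y in Set.Iic x, q y * r y)) := by
        rw [hE x, ← Complex.exp_neg]
      rw [he1, he2]
      exact h
    have hmain := ((hinv.const_mul (Complex.exp (I * μ / 2))).mul h1)
    have hfe : φb₁ = fun u => Complex.exp (I * μ / 2) * (E u)⁻¹ *
        (1 - (I / 2) * q u * ∫ y in Set.Ioi u, r y) := funext hφb₁
    rw [hfe]
    convert hmain using 1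
    case e'_4 => rfl
    case e'_8 => rfl
    rw [hp x, hφb₂ x]
    have h2 : (E x) ^ (-2 : ℤ) = ((E x) ^ 2)⁻¹ := by
      rw [zpow_neg]; norm_cast
    rw [h2]
    field_simp [hEne x]
    all_goals (ring_nf <;> simp only [Complex.I_sq] <;> (try ring) <;> (try rfl))
  · intro x
    have hmain := (((hE' x).const_mul (-Complex.exp (I * μ / 2))).mul (hG x))
    have hfe : φb₂ = fun u => -Complex.exp (I * μ / 2) * E u * ∫ y in Set.Ioi u, r y :=
      funext hφb₂
    rw [hfe]
    convert hmain using 1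
    case e'_4 => rfl
    case e'_8 => rfl
    rw [hs x, hφb₁ x]
    field_simp [hEne x]
    all_goals (ring_nf <;> simp only [Complex.I_sq] <;> (try ring) <;> (try rfl))
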